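/- arXiv:1610.09753 — 2 statements merged into one kernel-verified Lean document; each statement's English description precedes it below -/
import Mathlib

section
/- Let h : [0,∞) → ℝ be differentiable and nonnegative with h'(u) ≥ −h(u)/(1+u) for all u ≥ 0. Let γ > 0, L > 0 and u₀ ≥ 0 satisfy 16·h(0) ≥ γ·u₀ + L². Then: if u₀ ≥ 1 one has h(u₀) ≥ γ/32, and if u₀ ≤ 1 one has h(u₀) ≥ L²/32. -/
/-- Quantitative lower conclusion of Lemma 5.5 (inclusion of sublevel sets under the
expander flow), abstracted to real functions. -/
theorem expander_flow_lower_bound (h h' : ℝ → ℝ)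
    (hdiff : ∀ u : ℝ, 0 ≤ u → HasDerivAt h (h' u) u)
    (hnonneg : ∀ u : ℝ, 0 ≤ u → 0 ≤ h u)
    (hODE : ∀ u : ℝ, 0 ≤ u → h' u ≥ -(h u) / (1 + u))
    (γ L u₀ : ℝ) (hγ : 0 < γ) (hL : 0 < L) (hu₀ : 0 ≤ u₀)
    (hinit : 16 * h 0 ≥ γ * u₀ + L ^ 2) :
    (1 ≤ u₀ → h u₀ ≥ γ / 32) ∧ (u₀ ≤ 1 → h u₀ ≥ L ^ 2 / 32) := by
  set g : ℝ → ℝ := fun u => h u * (1 + u) with hg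
  have hgd : ∀ u : ℝ, 0 ≤ u → HasDerivAt g (h' u * (1 + u) + h u) u := by
    intro u hu
    have := (hdiff u hu).mul ((hasDerivAt_const u (1:ℝ)).add (hasDerivAt_id u))
    exact this.congr_deriv (by simp)
  have hmono : MonotoneOn g (Set.Ici 0) := by
    apply monotoneOn_of_deriv_nonneg (convex_Ici 0)
    · exact fun u hu => ((hgd u hu).continuousAt).continuousWithinAt
    · intro u hu
      rw [interior_Ici] at hu
      exact ((hgd u hu.le).differentiableAt).differentiableWithinAt
    · intro u hu
      rw [interior_Ici] at hu
      have hu' : (0:ℝ) ≤ u := hu.le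
      rw [(hgd u hu').deriv]
      have h1u : (0:ℝ) < 1 + u := by linarith
      have := (div_le_iff₀ h1u).mp (hODE u hu')
      linarith
  have hkey : h 0 ≤ h u₀ * (1 + u₀) := by
    have := hmono (Set.self_mem_Ici) (Set.mem_Ici.mpr hu₀) hu₀
    simpa [hg] using this
  have h1u₀ : (0:ℝ) < 1 + u₀ := by linarith
  constructor
  · intro h1
    have hL2 : (0:ℝ) ≤ L ^ 2 := sq_nonneg L
    -- h u₀ ≥ γ u₀ / (16 (1+u₀)) ≥ γ/32 since u₀/(1+u₀) ≥ 1/2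
    rw [ge_iff_le, div_le_iff₀ (by norm_num : (0:ℝ) < 32)]
    nlinarith [hkey, hnonneg u₀ hu₀]
  · intro h1
    rw [ge_iff_le, div_le_iff₀ (by norm_num : (0:ℝ) < 32)]
    nlinarith [hkey, hnonneg u₀ hu₀, mul_nonneg hγ.le hu₀]
end

section
/- Let C ≥ 0 and γ, L > 0 with γ ≥ L² ≥ 32·C. Let u₀ ≥ 0 and let h, p : [0,u₀] → ℝ be functions such that h is differentiable, h(u) − C ≤ p(u) ≤ h(u) for all u ∈ [0,u₀], h'(u) = −p(u)/(1+u) for all u ∈ [0,u₀], and h(0) ≤ (9/16)·(γ·u₀ + L²). Then h(u₀) ≤ 2γ. -/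
/-- Quantitative upper conclusion of Lemma 5.5 of the paper, abstracted to real
functions. -/
theorem expander_flow_upper_bound (C γ L u₀ : ℝ) (hC : 0 ≤ C)
    (hγ : 0 < γ) (hL : 0 < L) (hγL : γ ≥ L ^ 2) (hLC : L ^ 2 ≥ 32 * C)
    (hu₀ : 0 ≤ u₀) (h p : ℝ → ℝ)
    (hbound : ∀ u ∈ Set.Icc (0:ℝ) u₀, h u - C ≤ p u ∧ p u ≤ h u)
    (hODE : ∀ u ∈ Set.Icc (0:ℝ) u₀, HasDerivAt h (-(p u) / (1 + u)) u)
    (hinit : h 0 ≤ (9 / 16) * (γ * u₀ + L ^ 2)) :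
    h u₀ ≤ 2 * γ := by
  set F : ℝ → ℝ := fun u => (1 + u) * h u - C * u with hF
  have key : ∀ u ∈ Set.Icc (0:ℝ) u₀, HasDerivAt F (h u - p u - C) u := by
    intro u hu
    have hne : (1:ℝ) + u ≠ 0 := by nlinarith [hu.1]
    have h1 : HasDerivAt (fun u : ℝ => 1 + u) 1 u := by
      simpa using (hasDerivAt_id u).const_add (1:ℝ)
    have h2 : HasDerivAt (fun u => (1 + u) * h u)
        (1 * h u + (1 + u) * (-(p u) / (1 + u))) u := h1.mul (hODE u hu)
    have h3 : HasDerivAt (fun u : ℝ => C * u) C u := by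
      simpa using (hasDerivAt_id u).const_mul C
    have := h2.sub h3
    refine this.congr_deriv ?_
    rw [mul_comm (1 + u), div_mul_cancel₀ _ hne]
    ring
  have hanti : AntitoneOn F (Set.Icc 0 u₀) := by
    apply antitoneOn_of_deriv_nonpos (convex_Icc 0 u₀)
    · intro u hu
      exact (key u hu).continuousAt.continuousWithinAt
    · intro u hu
      rw [interior_Icc] at hu
      exact (key u (Set.mem_Icc_of_Ioo hu)).differentiableAt.differentiableWithinAt
    · intro u hu
      rw [interior_Icc] at hu
      rw [(key u (Set.mem_Icc_of_Ioo hu)).deriv]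
      have := (hbound u (Set.mem_Icc_of_Ioo hu)).1
      linarith
  have hle : F u₀ ≤ F 0 :=
    hanti (Set.left_mem_Icc.mpr hu₀) (Set.right_mem_Icc.mpr hu₀) hu₀
  simp only [hF] at hle
  have hC' : 32 * C ≤ γ := le_trans hLC hγL
  nlinarith [mul_nonneg hγ.le hu₀, mul_nonneg hC hu₀]
end
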